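/- arXiv:1703.09089 — 2 statements merged into one kernel-verified Lean document; each statement's English description precedes it below -/
import Mathlib

section
/- Let n ≥ 1, let x be a partition of [0,1] of size n, let f : [0,1] → [0,1] be a continuous map which is Markov for x, and suppose the incidence matrix C of f with respect to x is aperiodic (primitive), i.e. there exists p ≥ 1 with every entry of C^p positive. Then for every subset J of [0,1] that contains some partition interval [x(k−1), x(k)], there exists p ≥ 1 with f^p(J) = [0,1]. -/
open Set Matrix

/-- A partition of `[0,1]` of size `m`: a strictly increasing map
`{0,1,…,m} → ℝ` with first value `0` and last value `1`. -/
structure UnitPartition (m : ℕ) where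
  pts : Fin (m + 1) → ℝ
  strictMono : StrictMono pts
  zero : pts 0 = 0
  one : pts (Fin.last m) = 1

/-- The `j`-th interval `I_j = [y(j-1), y(j)]` of a partition, for `j = 1, …, m`. -/
def UnitPartition.interval {m : ℕ} (y : UnitPartition m) (j : Fin m) : Set ℝ :=
  Set.Icc (y.pts j.castSucc) (y.pts j.succ)

/-- `f` is Markov for the partition `y`. -/
def IsMarkov {m : ℕ} (y : UnitPartition m) (f : ℝ → ℝ) : Prop :=
  ∀ j : Fin m, ∃ a b : Fin (m + 1), a ≤ b ∧
    f '' y.interval j = Set.Icc (y.pts a) (y.pts b)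

open Classical in
/-- The incidence matrix of `f` with respect to `y`, with natural-number entries:
`N i j = 1` if `I_i ⊆ f(I_j)` and `0` otherwise. -/
noncomputable def incidence {m : ℕ} (y : UnitPartition m) (f : ℝ → ℝ) :
    Matrix (Fin m) (Fin m) ℕ :=
  Matrix.of fun i j => if y.interval i ⊆ f '' y.interval j then 1 else 0

open Classical in
/-- The incidence matrix of `f` with respect to `y`, regarded as a real matrix. -/
noncomputable def incidenceR {m : ℕ} (y : UnitPartition m) (f : ℝ → ℝ) :
    Matrix (Fin m) (Fin m) ℝ :=
  Matrix.of fun i j => if y.interval i ⊆ f '' y.interval j then 1 else 0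


lemma incidence_pos_iff {m : ℕ} (y : UnitPartition m) (f : ℝ → ℝ) (i j : Fin m) :
    0 < incidence y f i j ↔ y.interval i ⊆ f '' y.interval j := by
  classical
  simp only [incidence, Matrix.of_apply]
  split_ifs with h <;> simp [h]

lemma key_subset {m : ℕ} (y : UnitPartition m) (f : ℝ → ℝ) :
    ∀ p (l k : Fin m), 0 < (incidence y f ^ p) l k →
      y.interval l ⊆ f^[p] '' y.interval k := by
  intro p
  induction p with
  | zero =>
      intro l k h
      simp only [pow_zero, Matrix.one_apply] at h
      split_ifs at h with hlk
      · subst hlk; simp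
      · exact absurd h (lt_irrefl 0)
  | succ p ih =>
      intro l k h
      rw [pow_succ, Matrix.mul_apply] at h
      have : ∃ j, 0 < (incidence y f ^ p) l j * incidence y f j k := by
        by_contra hc
        push_neg at hc
        have : ∑ j, (incidence y f ^ p) l j * incidence y f j k = 0 :=
          Finset.sum_eq_zero fun j _ => Nat.le_antisymm (hc j) (Nat.zero_le _)
        omega
      obtain ⟨j, hj⟩ := this
      have h1 : 0 < (incidence y f ^ p) l j := Nat.pos_of_mul_pos_left (by
        rwa [Nat.mul_comm] at hj)
      have h2 : 0 < incidence y f j k := Nat.pos_of_mul_pos_left hj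
      have hjk := (incidence_pos_iff y f j k).1 h2
      have hlj := ih l j h1
      calc y.interval l ⊆ f^[p] '' y.interval j := hlj
        _ ⊆ f^[p] '' (f '' y.interval k) := Set.image_mono hjk
        _ = f^[p + 1] '' y.interval k := by
            rw [Function.iterate_succ, Set.image_comp]

lemma union_intervals {m : ℕ} (hm : 1 ≤ m) (y : UnitPartition m) :
    ⋃ j, y.interval j = Set.Icc (0 : ℝ) 1 := by
  apply Set.Subset.antisymm
  · refine Set.iUnion_subset fun j => ?_
    have h0 : y.pts 0 ≤ y.pts j.castSucc := y.strictMono.monotone (Fin.zero_le _)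
    have h1 : y.pts j.succ ≤ y.pts (Fin.last m) := y.strictMono.monotone (Fin.le_last _)
    rw [y.zero] at h0; rw [y.one] at h1
    exact Set.Icc_subset_Icc h0 h1
  · have main : ∀ r : ℕ, ∀ hr : r ≤ m,
        Set.Icc (0 : ℝ) (y.pts ⟨r, Nat.lt_succ_of_le hr⟩) ⊆ ⋃ j, y.interval j := by
      intro r
      induction r with
      | zero =>
          intro hr t ht
          have h0 : y.pts ⟨0, Nat.lt_succ_of_le hr⟩ = 0 := y.zero
          rw [h0] at ht
          have : t = 0 := le_antisymm ht.2 ht.1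
          subst this
          refine Set.mem_iUnion.2 ⟨⟨0, hm⟩, ?_⟩
          have hc : (⟨0, hm⟩ : Fin m).castSucc = 0 := by ext; simp
          constructor
          · rw [hc, y.zero]
          · rw [← y.zero, ← hc]
            exact (y.strictMono (by simp [Fin.lt_def])).le
      | succ r ih =>
          intro hr t ht
          rcases le_or_gt t (y.pts ⟨r, Nat.lt_succ_of_le (Nat.le_of_succ_le hr)⟩) with h | h
          · exact ih (Nat.le_of_succ_le hr) ⟨ht.1, h⟩
          · refine Set.mem_iUnion.2 ⟨⟨r, hr⟩, ?_⟩
            exact ⟨h.le, ht.2⟩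
    intro t ht
    have := main m le_rfl
    have hlast : (⟨m, Nat.lt_succ_of_le le_rfl⟩ : Fin (m+1)) = Fin.last m := rfl
    rw [hlast, y.one] at this
    exact this ht

theorem eventually_onto_of_aperiodic
    (n : ℕ) (hn : 1 ≤ n) (x : UnitPartition n) (f : ℝ → ℝ)
    (hmaps : Set.MapsTo f (Set.Icc 0 1) (Set.Icc 0 1))
    (hcont : ContinuousOn f (Set.Icc 0 1))
    (hMarkov : IsMarkov x f)
    (haper : ∃ p : ℕ, 1 ≤ p ∧ ∀ l k : Fin n, 0 < (incidence x f ^ p) l k) :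
    ∀ J : Set ℝ, J ⊆ Set.Icc 0 1 → (∃ k : Fin n, x.interval k ⊆ J) →
      ∃ p : ℕ, 1 ≤ p ∧ f^[p] '' J = Set.Icc (0 : ℝ) 1 := by
  obtain ⟨p, hp1, hppos⟩ := haper
  intro J hJ ⟨k, hk⟩
  refine ⟨p, hp1, Set.Subset.antisymm ?_ ?_⟩
  · intro t ⟨s, hsJ, hst⟩
    exact hst ▸ (hmaps.iterate p) (hJ hsJ)
  · rw [← union_intervals hn x]
    refine Set.iUnion_subset fun l => ?_
    calc x.interval l ⊆ f^[p] '' x.interval k := key_subset x f p l k (hppos l k)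
      _ ⊆ f^[p] '' J := Set.image_mono hk
end

section
/- Let m ≥ 1, let y be a partition of [0,1] of size m, let λ > 1, and let f : [0,1] → [0,1] be continuous, strictly monotone on each interval I_j = [y(j−1), y(j)], mapping every partition point y(j) to a partition point, and satisfying |f(s) − f(t)| = λ·|s − t| for all s, t in the same interval I_j. Suppose moreover that for every j = 1,…,m there exists p ≥ 1 with f^p(I_j) = [0,1]. Let N be the incidence matrix of f with respect to y. Then: (1) N is an aperiodic (primitive) odd-block matrix with only entries 0 and 1; (2) the vector w of interval lengths, w_j = y(j) − y(j−1), is a positive eigenvector of Nᵀ with eigenvalue λ, so λ is an eigenvalue of N; and (3) λ is the leading eigenvalue of N: every complex eigenvalue μ of N satisfies |μ| ≤ λ. -/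
open Set Matrix

namespace UnitPartition
variable {m : ℕ} (y : UnitPartition m)

lemma pts_mem (j : Fin (m+1)) : y.pts j ∈ Set.Icc (0:ℝ) 1 := by
  constructor
  · rw [← y.zero]; exact y.strictMono.monotone (Fin.zero_le j)
  · rw [← y.one]; exact y.strictMono.monotone (Fin.le_last j)

lemma interval_subset (j : Fin m) : y.interval j ⊆ Set.Icc (0:ℝ) 1 := by
  intro x hx
  exact ⟨le_trans (y.pts_mem j.castSucc).1 hx.1, le_trans hx.2 (y.pts_mem j.succ).2⟩

lemma cover : ∀ (n : ℕ) (a b : Fin (m+1)), b.val - a.val ≤ n → a < b →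
    ∀ x ∈ Set.Icc (y.pts a) (y.pts b), ∃ i : Fin m,
      a ≤ i.castSucc ∧ i.succ ≤ b ∧ x ∈ y.interval i := by
  intro n
  induction n with
  | zero =>
    intro a b hn hab x hx
    have := Fin.lt_def.1 hab
    omega
  | succ n ih =>
    intro a b hn hab x hx
    have hab' := Fin.lt_def.1 hab
    have hbm : b.val ≤ m := Fin.is_le b
    have ham : a.val < m := by omega
    set i0 : Fin m := ⟨a.val, ham⟩ with hi0
    have hc : i0.castSucc = a := by ext; simp [hi0]
    have hsucc : (i0.succ : Fin (m+1)).val = a.val + 1 := rfl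
    by_cases hx2 : x ≤ y.pts i0.succ
    · exact ⟨i0, le_of_eq hc.symm, Fin.le_def.2 (by omega), ⟨hc ▸ hx.1, hx2⟩⟩
    · push_neg at hx2
      have hlt : i0.succ < b := by
        rcases lt_or_ge i0.succ b with h | h
        · exact h
        · exact absurd (le_trans hx.2 (y.strictMono.monotone h)) (not_le.2 hx2)
      obtain ⟨i, h1, h2, h3⟩ := ih i0.succ b (by
        have := Fin.lt_def.1 hlt; omega) hlt x ⟨hx2.le, hx.2⟩
      exact ⟨i, le_trans (le_of_lt (hc ▸ (Fin.castSucc_lt_succ : i0.castSucc < i0.succ))) h1, h2, h3⟩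

lemma telescope (a b : Fin (m+1)) (hab : a ≤ b) :
    ∑ i : Fin m, (if a ≤ i.castSucc ∧ i.succ ≤ b then (y.pts i.succ - y.pts i.castSucc) else 0)
      = y.pts b - y.pts a := by
  classical
  have hbm : b.val ≤ m := Fin.is_le b
  set g : ℕ → ℝ := fun n => y.pts ⟨min n m, by omega⟩ with hg
  have hgy : ∀ j : Fin (m+1), g j.val = y.pts j := by
    intro j
    simp only [hg]
    congr 1
    ext
    simp
    omega
  have key : ∀ i : Fin m, (if a ≤ i.castSucc ∧ i.succ ≤ b then (y.pts i.succ - y.pts i.castSucc) else 0)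
      = (if (i : ℕ) ∈ Finset.Ico a.val b.val then (g ((i:ℕ)+1) - g (i:ℕ)) else 0) := by
    intro i
    have h1 : (a ≤ i.castSucc ∧ i.succ ≤ b) ↔ (i : ℕ) ∈ Finset.Ico a.val b.val := by
      rw [Finset.mem_Ico, Fin.le_def, Fin.le_def]
      simp only [Fin.coe_castSucc, Fin.val_succ]
      omega
    rw [if_congr h1 rfl rfl]
    split
    · congr 1
      · rw [← hgy i.succ]; rfl
      · rw [← hgy i.castSucc]; rfl
    · rfl
  rw [Finset.sum_congr rfl (fun i _ => key i)]
  have h2 : ∑ i : Fin m, (if (i : ℕ) ∈ Finset.Ico a.val b.val then (g ((i:ℕ)+1) - g (i:ℕ)) else 0)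
      = ∑ n ∈ Finset.range m, (if n ∈ Finset.Ico a.val b.val then (g (n+1) - g n) else 0) :=
    Fin.sum_univ_eq_sum_range (fun n => if n ∈ Finset.Ico a.val b.val then (g (n+1) - g n) else 0) m
  rw [h2, ← Finset.sum_filter]
  have h3 : (Finset.range m).filter (· ∈ Finset.Ico a.val b.val) = Finset.Ico a.val b.val := by
    ext n
    simp only [Finset.mem_filter, Finset.mem_range, Finset.mem_Ico]
    omega
  rw [h3, Finset.sum_Ico_eq_sub _ (Fin.le_def.1 hab), Finset.sum_range_sub g, Finset.sum_range_sub g,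
    hgy a, hgy b]
  ring

end UnitPartition

lemma image_affine (a b lam : ℝ) (hab : a ≤ b) (hlam : 0 < lam) (f : ℝ → ℝ)
    (haff : ∀ t ∈ Set.Icc a b, f t = f a + lam * (t - a)) :
    f '' Set.Icc a b = Set.Icc (f a) (f b) := by
  have hb := haff b ⟨hab, le_refl b⟩
  ext x
  constructor
  · rintro ⟨t, ht, rfl⟩
    rw [haff t ht]
    constructor
    · nlinarith [ht.1]
    · nlinarith [ht.2]
  · intro hx
    have ht : a + (x - f a) / lam ∈ Set.Icc a b := by
      constructor
      · nlinarith [div_nonneg (sub_nonneg.2 hx.1) hlam.le]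
      · have : (x - f a) / lam ≤ b - a := by
          rw [div_le_iff₀ hlam]; nlinarith [hx.2]
        linarith
    refine ⟨a + (x - f a) / lam, ht, ?_⟩
    rw [haff _ ht]
    field_simp
    ring

lemma image_affine_anti (a b lam : ℝ) (hab : a ≤ b) (hlam : 0 < lam) (f : ℝ → ℝ)
    (haff : ∀ t ∈ Set.Icc a b, f t = f a - lam * (t - a)) :
    f '' Set.Icc a b = Set.Icc (f b) (f a) := by
  have hb := haff b ⟨hab, le_refl b⟩
  ext x
  constructor
  · rintro ⟨t, ht, rfl⟩
    rw [haff t ht]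
    constructor
    · nlinarith [ht.2]
    · nlinarith [ht.1]
  · intro hx
    have ht : a + (f a - x) / lam ∈ Set.Icc a b := by
      constructor
      · nlinarith [div_nonneg (sub_nonneg.2 hx.2) hlam.le]
      · have : (f a - x) / lam ≤ b - a := by
          rw [div_le_iff₀ hlam]; nlinarith [hx.1]
        linarith
    refine ⟨a + (f a - x) / lam, ht, ?_⟩
    rw [haff _ ht]
    field_simp
    ring




/-- An `m × m` nonnegative integer matrix is odd-block. -/
def IsOddBlock {m : ℕ} (A : Matrix (Fin m) (Fin m) ℕ) : Prop :=
  (∀ (j i₁ i₂ i₃ : Fin m), i₁ ≤ i₂ → i₂ ≤ i₃ → A i₁ j ≠ 0 → A i₃ j ≠ 0 → A i₂ j ≠ 0) ∧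
  ∃ φ : Fin (m + 1) → Fin (m + 1), ∀ (i j : Fin m),
    Odd (A i j) ↔
      (min (φ j.castSucc) (φ j.succ) < i.succ ∧ i.succ ≤ max (φ j.castSucc) (φ j.succ))

theorem incidence_aperiodic_oddblock_leading_eigenvalue
    (m : ℕ) (hm : 1 ≤ m) (y : UnitPartition m) (lam : ℝ) (hlam : 1 < lam)
    (f : ℝ → ℝ)
    (hmaps : Set.MapsTo f (Set.Icc 0 1) (Set.Icc 0 1))
    (hcont : ContinuousOn f (Set.Icc 0 1))
    (hmono : ∀ j : Fin m, StrictMonoOn f (y.interval j) ∨ StrictAntiOn f (y.interval j))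
    (hpts : ∀ j : Fin (m + 1), ∃ k : Fin (m + 1), f (y.pts j) = y.pts k)
    (hlen : ∀ j : Fin m, ∀ s ∈ y.interval j, ∀ t ∈ y.interval j,
      |f s - f t| = lam * |s - t|)
    (honto : ∀ j : Fin m, ∃ p : ℕ, 1 ≤ p ∧ f^[p] '' y.interval j = Set.Icc (0 : ℝ) 1) :
    -- (1) `N` is an aperiodic odd-block matrix with only entries 0 and 1
    (IsOddBlock (incidence y f) ∧
      (∃ p : ℕ, 1 ≤ p ∧ ∀ i j : Fin m, 0 < (incidence y f ^ p) i j) ∧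
      (∀ i j : Fin m, incidence y f i j = 0 ∨ incidence y f i j = 1)) ∧
    -- (2) the vector of interval lengths is a positive eigenvector of `Nᵀ` with
    -- eigenvalue `λ`, so `λ` is an eigenvalue of `N`
    ((incidenceR y f)ᵀ.mulVec (fun i => y.pts i.succ - y.pts i.castSucc)
        = lam • (fun j : Fin m => y.pts j.succ - y.pts j.castSucc) ∧
      (∀ i : Fin m, 0 < y.pts i.succ - y.pts i.castSucc) ∧
      Module.End.HasEigenvalue (Matrix.toLin' (incidenceR y f)) lam) ∧
    -- (3) `λ` is the leading eigenvalue of `N`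
    (∀ μ : ℂ, μ ∈ spectrum ℂ ((incidenceR y f).map (Complex.ofReal)) →
      ‖μ‖ ≤ lam) := by
  
  classical
  choose φ hφ using hpts
  have hlam0 : (0:ℝ) < lam := lt_trans one_pos hlam
  have hltj : ∀ j : Fin m, y.pts j.castSucc < y.pts j.succ :=
    fun j => y.strictMono (Fin.castSucc_lt_succ : j.castSucc < j.succ)
  have hle : ∀ j : Fin m, y.pts j.castSucc ≤ y.pts j.succ := fun j => (hltj j).le
  have hmemc : ∀ j : Fin m, y.pts j.castSucc ∈ y.interval j := fun j => ⟨le_refl _, hle j⟩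
  have hmems : ∀ j : Fin m, y.pts j.succ ∈ y.interval j := fun j => ⟨hle j, le_refl _⟩
  -- image of each interval
  have himg : ∀ j : Fin m, f '' y.interval j =
      Set.Icc (y.pts (min (φ j.castSucc) (φ j.succ))) (y.pts (max (φ j.castSucc) (φ j.succ))) := by
    intro j
    rcases hmono j with hmo | han
    · have haff : ∀ t ∈ Set.Icc (y.pts j.castSucc) (y.pts j.succ),
          f t = f (y.pts j.castSucc) + lam * (t - y.pts j.castSucc) := by
        intro t ht
        have h1 := hlen j t ht (y.pts j.castSucc) (hmemc j)
        rcases eq_or_lt_of_le ht.1 with he | hl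
        · rw [← he]; ring
        · have h2 : f (y.pts j.castSucc) < f t := hmo (hmemc j) ht hl
          rw [abs_of_pos (sub_pos.2 h2), abs_of_pos (sub_pos.2 hl)] at h1
          linarith
      have him := image_affine _ _ lam (hle j) hlam0 f haff
      have hmo' : f (y.pts j.castSucc) < f (y.pts j.succ) := hmo (hmemc j) (hmems j) (hltj j)
      rw [hφ j.castSucc, hφ j.succ] at hmo'
      have hφlt : φ j.castSucc < φ j.succ := y.strictMono.lt_iff_lt.1 hmo'
      rw [show y.interval j = Set.Icc (y.pts j.castSucc) (y.pts j.succ) from rfl, him,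
        hφ j.castSucc, hφ j.succ, min_eq_left hφlt.le, max_eq_right hφlt.le]
    · have haff : ∀ t ∈ Set.Icc (y.pts j.castSucc) (y.pts j.succ),
          f t = f (y.pts j.castSucc) - lam * (t - y.pts j.castSucc) := by
        intro t ht
        have h1 := hlen j t ht (y.pts j.castSucc) (hmemc j)
        rcases eq_or_lt_of_le ht.1 with he | hl
        · rw [← he]; ring
        · have h2 : f t < f (y.pts j.castSucc) := han (hmemc j) ht hl
          rw [abs_of_neg (sub_neg.2 h2), abs_of_pos (sub_pos.2 hl)] at h1
          linarith
      have him := image_affine_anti _ _ lam (hle j) hlam0 f haff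
      have hmo' : f (y.pts j.succ) < f (y.pts j.castSucc) := han (hmemc j) (hmems j) (hltj j)
      rw [hφ j.castSucc, hφ j.succ] at hmo'
      have hφlt : φ j.succ < φ j.castSucc := y.strictMono.lt_iff_lt.1 hmo'
      rw [show y.interval j = Set.Icc (y.pts j.castSucc) (y.pts j.succ) from rfl, him,
        hφ j.castSucc, hφ j.succ, min_eq_right hφlt.le, max_eq_left hφlt.le]
  -- φ endpoints differ
  have hφne : ∀ j : Fin m, φ j.castSucc ≠ φ j.succ := by
    intro j h
    have h1 := hlen j (y.pts j.succ) (hmems j) (y.pts j.castSucc) (hmemc j)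
    rw [hφ j.castSucc, hφ j.succ, h, sub_self, abs_zero] at h1
    have : |y.pts j.succ - y.pts j.castSucc| > 0 := abs_pos.2 (by linarith [hltj j])
    nlinarith
  have hminmax : ∀ j : Fin m, min (φ j.castSucc) (φ j.succ) < max (φ j.castSucc) (φ j.succ) :=
    fun j => min_lt_max.2 (hφne j)
  -- incidence characterization
  have hsub : ∀ i j : Fin m, (y.interval i ⊆ f '' y.interval j) ↔
      (min (φ j.castSucc) (φ j.succ) ≤ i.castSucc ∧
        i.succ ≤ max (φ j.castSucc) (φ j.succ)) := by
    intro i j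
    rw [himg j, show y.interval i = Set.Icc (y.pts i.castSucc) (y.pts i.succ) from rfl,
      Set.Icc_subset_Icc_iff (hle i)]
    exact and_congr y.strictMono.le_iff_le y.strictMono.le_iff_le
  have hN : ∀ i j : Fin m, incidence y f i j =
      if (min (φ j.castSucc) (φ j.succ) ≤ i.castSucc ∧
        i.succ ≤ max (φ j.castSucc) (φ j.succ)) then 1 else 0 := by
    intro i j
    simp only [incidence, Matrix.of_apply]
    exact if_congr (hsub i j) rfl rfl
  have hR : ∀ i j : Fin m, incidenceR y f i j =
      if (min (φ j.castSucc) (φ j.succ) ≤ i.castSucc ∧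
        i.succ ≤ max (φ j.castSucc) (φ j.succ)) then 1 else 0 := by
    intro i j
    simp only [incidenceR, Matrix.of_apply]
    exact if_congr (hsub i j) rfl rfl
  have h01 : ∀ i j : Fin m, incidence y f i j = 0 ∨ incidence y f i j = 1 := by
    intro i j
    rw [hN]
    split
    · right; rfl
    · left; rfl
  have hne0 : ∀ i j : Fin m, incidence y f i j ≠ 0 ↔
      (min (φ j.castSucc) (φ j.succ) ≤ i.castSucc ∧
        i.succ ≤ max (φ j.castSucc) (φ j.succ)) := by
    intro i j
    rw [hN]
    split
    · simp_all
    · simp_all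
  -- little Fin fact
  have hfin : ∀ (a : Fin (m+1)) (i : Fin m), a ≤ i.castSucc ↔ a < i.succ := by
    intro a i
    rw [Fin.le_def, Fin.lt_def]
    simp only [Fin.coe_castSucc, Fin.val_succ]
    omega
  refine ⟨⟨⟨?_, φ, ?_⟩, ?_, h01⟩, ⟨?_, fun i => sub_pos.2 (hltj i), ?_⟩, ?_⟩
  · -- consecutive columns
    intro j i1 i2 i3 h12 h23 h1 h3
    rw [hne0] at h1 h3 ⊢
    refine ⟨le_trans h1.1 ?_, le_trans ?_ h3.2⟩
    · exact Fin.castSucc_le_castSucc_iff.2 h12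
    · exact Fin.succ_le_succ_iff.2 h23
  · -- odd-block φ
    intro i j
    rw [hN]
    split
    · next h =>
      exact iff_of_true odd_one ⟨(hfin _ i).1 h.1, h.2⟩
    · next h =>
      exact iff_of_false (by simp [Nat.odd_iff]) (fun hc => h ⟨(hfin _ i).2 hc.1, hc.2⟩)
  · -- primitivity
    choose P hP1 hP using honto
    have hsurj : Set.Icc (0:ℝ) 1 ⊆ f '' Set.Icc (0:ℝ) 1 := by
      obtain ⟨q, hq⟩ : ∃ q, P ⟨0, hm⟩ = q + 1 := ⟨P ⟨0, hm⟩ - 1, by have := hP1 ⟨0, hm⟩; omega⟩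
      intro x hx
      rw [← hP ⟨0, hm⟩, hq, Function.iterate_succ', Set.image_comp] at hx
      obtain ⟨t, ht, rfl⟩ := hx
      exact ⟨t, by
        obtain ⟨u, hu, rfl⟩ := ht
        exact (hmaps.iterate q) (y.interval_subset _ hu), rfl⟩
    have hfull : f '' Set.Icc (0:ℝ) 1 = Set.Icc 0 1 :=
      subset_antisymm hmaps.image_subset hsurj
    have hiter : ∀ (j : Fin m) (p : ℕ), P j ≤ p → f^[p] '' y.interval j = Set.Icc 0 1 := by
      intro j p hp
      induction p with
      | zero => have := hP1 j; omega
      | succ n ih =>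
        rcases eq_or_lt_of_le hp with he | hl
        · rw [← he]; exact hP j
        · have hn : P j ≤ n := by omega
          rw [Function.iterate_succ', Set.image_comp, ih hn, hfull]
    have hcov : ∀ (p : ℕ) (j : Fin m), ∀ x ∈ f^[p] '' y.interval j,
        ∃ k : Fin m, (incidence y f ^ p) k j ≠ 0 ∧ x ∈ y.interval k := by
      intro p
      induction p with
      | zero =>
        intro j x hx
        refine ⟨j, ?_, by simpa using hx⟩
        simp [pow_zero, Matrix.one_apply]
      | succ n ih =>
        intro j x hx
        rw [Function.iterate_succ', Set.image_comp] at hx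
        obtain ⟨z, hz, rfl⟩ := hx
        obtain ⟨k, hk, hzk⟩ := ih j z hz
        have hfz : f z ∈ Set.Icc (y.pts (min (φ k.castSucc) (φ k.succ)))
            (y.pts (max (φ k.castSucc) (φ k.succ))) := by
          rw [← himg k]; exact ⟨z, hzk, rfl⟩
        obtain ⟨i, hi1, hi2, hi3⟩ := y.cover m _ _ (by omega) (hminmax k) (f z) hfz
        refine ⟨i, ?_, hi3⟩
        rw [pow_succ', Matrix.mul_apply]
        intro h0
        rw [Finset.sum_eq_zero_iff] at h0
        have h1 := h0 k (Finset.mem_univ k)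
        rw [Nat.mul_eq_zero] at h1
        rcases h1 with h1 | h1
        · exact (hne0 i k).2 ⟨hi1, hi2⟩ h1
        · exact hk h1
    refine ⟨∑ j : Fin m, P j, ?_, ?_⟩
    · calc 1 ≤ P ⟨0, hm⟩ := hP1 _
        _ ≤ ∑ j : Fin m, P j := Finset.single_le_sum (fun _ _ => Nat.zero_le _) (Finset.mem_univ _)
    · intro i j
      set x : ℝ := (y.pts i.castSucc + y.pts i.succ) / 2 with hxdef
      have hximem : x ∈ y.interval i := ⟨by simp only [hxdef]; linarith [hltj i],
        by simp only [hxdef]; linarith [hltj i]⟩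
      have hx : x ∈ f^[∑ j : Fin m, P j] '' y.interval j := by
        rw [hiter j _ (Finset.single_le_sum (fun _ _ => Nat.zero_le _) (Finset.mem_univ j))]
        exact y.interval_subset i hximem
      obtain ⟨k, hk, hxk⟩ := hcov _ j x hx
      have hki : k = i := by
        by_contra hki
        rcases lt_or_gt_of_ne hki with h | h
        · have h1 : y.pts k.succ ≤ y.pts i.castSucc := y.strictMono.monotone (by
            rw [Fin.le_def]
            simp only [Fin.val_succ, Fin.coe_castSucc]
            exact Fin.lt_def.1 h)
          have h2 : y.pts i.castSucc < x := by simp only [hxdef]; linarith [hltj i]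
          linarith [hxk.2]
        · have h1 : y.pts i.succ ≤ y.pts k.castSucc := y.strictMono.monotone (by
            rw [Fin.le_def]
            simp only [Fin.val_succ, Fin.coe_castSucc]
            exact Fin.lt_def.1 h)
          have h2 : x < y.pts i.succ := by simp only [hxdef]; linarith [hltj i]
          linarith [hxk.1]
      exact hki ▸ Nat.pos_of_ne_zero hk
  · -- eigenvector equation
    funext j
    have hterm : ∀ i : Fin m, (incidenceR y f)ᵀ j i * (y.pts i.succ - y.pts i.castSucc)
        = (if min (φ j.castSucc) (φ j.succ) ≤ i.castSucc ∧
              i.succ ≤ max (φ j.castSucc) (φ j.succ)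
            then (y.pts i.succ - y.pts i.castSucc) else 0) := by
      intro i
      rw [Matrix.transpose_apply, hR]
      split <;> simp
    have htel := y.telescope (min (φ j.castSucc) (φ j.succ)) (max (φ j.castSucc) (φ j.succ))
      min_le_max
    show ∑ i : Fin m, (incidenceR y f)ᵀ j i * (y.pts i.succ - y.pts i.castSucc)
        = lam * (y.pts j.succ - y.pts j.castSucc)
    rw [Finset.sum_congr rfl (fun i _ => hterm i), htel,
      y.strictMono.monotone.map_max, y.strictMono.monotone.map_min,
      max_sub_min_eq_abs, ← hφ j.castSucc, ← hφ j.succ,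
      hlen j _ (hmems j) _ (hmemc j), abs_of_pos (sub_pos.2 (hltj j))]
  · -- eigenvalue
    have hwv : (incidenceR y f)ᵀ.mulVec (fun i => y.pts i.succ - y.pts i.castSucc)
        = lam • (fun j : Fin m => y.pts j.succ - y.pts j.castSucc) := by
      funext j
      have hterm : ∀ i : Fin m, (incidenceR y f)ᵀ j i * (y.pts i.succ - y.pts i.castSucc)
          = (if min (φ j.castSucc) (φ j.succ) ≤ i.castSucc ∧
                i.succ ≤ max (φ j.castSucc) (φ j.succ)
              then (y.pts i.succ - y.pts i.castSucc) else 0) := by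
        intro i
        rw [Matrix.transpose_apply, hR]
        split <;> simp
      have htel := y.telescope (min (φ j.castSucc) (φ j.succ)) (max (φ j.castSucc) (φ j.succ))
        min_le_max
      show ∑ i : Fin m, (incidenceR y f)ᵀ j i * (y.pts i.succ - y.pts i.castSucc)
          = lam * (y.pts j.succ - y.pts j.castSucc)
      rw [Finset.sum_congr rfl (fun i _ => hterm i), htel,
        y.strictMono.monotone.map_max, y.strictMono.monotone.map_min,
        max_sub_min_eq_abs, ← hφ j.castSucc, ← hφ j.succ,
        hlen j _ (hmems j) _ (hmemc j), abs_of_pos (sub_pos.2 (hltj j))]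
    have hwne : (fun i : Fin m => y.pts i.succ - y.pts i.castSucc) ≠ 0 := by
      intro h
      have := congrFun h ⟨0, hm⟩
      simp only [Pi.zero_apply] at this
      linarith [hltj ⟨0, hm⟩]
    have hdetT : ((incidenceR y f)ᵀ - lam • 1).det = 0 := by
      rw [← Matrix.exists_mulVec_eq_zero_iff]
      refine ⟨_, hwne, ?_⟩
      rw [Matrix.sub_mulVec, hwv, Matrix.smul_mulVec, Matrix.one_mulVec, sub_self]
    have hdet : ((incidenceR y f) - lam • 1).det = 0 := by
      have h1 : ((incidenceR y f)ᵀ - lam • 1) = ((incidenceR y f) - lam • 1)ᵀ := by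
        rw [Matrix.transpose_sub, Matrix.transpose_smul, Matrix.transpose_one]
      rwa [h1, Matrix.det_transpose] at hdetT
    obtain ⟨v, hv0, hv⟩ := Matrix.exists_mulVec_eq_zero_iff.2 hdet
    rw [Matrix.sub_mulVec, Matrix.smul_mulVec, Matrix.one_mulVec, sub_eq_zero] at hv
    exact Module.End.hasEigenvalue_of_hasEigenvector
      ⟨Module.End.mem_eigenspace_iff.2 (by rw [Matrix.toLin'_apply]; exact hv), hv0⟩
  · -- leading eigenvalue
    intro mu hmu
    set w : Fin m → ℝ := fun i => y.pts i.succ - y.pts i.castSucc with hwdef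
    have hw : ∀ i, 0 < w i := fun i => sub_pos.2 (hltj i)
    have hwv : (incidenceR y f)ᵀ.mulVec w = lam • w := by
      funext j
      have hterm : ∀ i : Fin m, (incidenceR y f)ᵀ j i * (y.pts i.succ - y.pts i.castSucc)
          = (if min (φ j.castSucc) (φ j.succ) ≤ i.castSucc ∧
                i.succ ≤ max (φ j.castSucc) (φ j.succ)
              then (y.pts i.succ - y.pts i.castSucc) else 0) := by
        intro i
        rw [Matrix.transpose_apply, hR]
        split <;> simp
      have htel := y.telescope (min (φ j.castSucc) (φ j.succ)) (max (φ j.castSucc) (φ j.succ))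
        min_le_max
      show ∑ i : Fin m, (incidenceR y f)ᵀ j i * (y.pts i.succ - y.pts i.castSucc)
          = lam * (y.pts j.succ - y.pts j.castSucc)
      rw [Finset.sum_congr rfl (fun i _ => hterm i), htel,
        y.strictMono.monotone.map_max, y.strictMono.monotone.map_min,
        max_sub_min_eq_abs, ← hφ j.castSucc, ← hφ j.succ,
        hlen j _ (hmems j) _ (hmemc j), abs_of_pos (sub_pos.2 (hltj j))]
    set A := (incidenceR y f).map (Complex.ofReal) with hA
    rw [spectrum.mem_iff] at hmu
    have hdet : ((algebraMap ℂ (Matrix (Fin m) (Fin m) ℂ)) mu - A).det = 0 := by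
      by_contra h
      exact hmu ((Matrix.isUnit_iff_isUnit_det _).2 (isUnit_iff_ne_zero.2 h))
    have hdetT : (((algebraMap ℂ (Matrix (Fin m) (Fin m) ℂ)) mu - A)ᵀ).det = 0 := by
      rw [Matrix.det_transpose]; exact hdet
    obtain ⟨v, hv0, hv⟩ := Matrix.exists_mulVec_eq_zero_iff.2 hdetT
    rw [Algebra.algebraMap_eq_smul_one, Matrix.transpose_sub, Matrix.transpose_smul,
      Matrix.transpose_one, Matrix.sub_mulVec, Matrix.smul_mulVec,
      Matrix.one_mulVec, sub_eq_zero] at hv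
    -- hv : mu • v = Aᵀ.mulVec v
    obtain ⟨i0, -, hi0⟩ := Finset.exists_max_image (Finset.univ : Finset (Fin m))
      (fun i => ‖v i‖ / w i) ⟨⟨0, hm⟩, Finset.mem_univ _⟩
    set c : ℝ := ‖v i0‖ / w i0 with hcdef
    have hbound : ∀ i, ‖v i‖ ≤ c * w i := by
      intro i
      exact (div_le_iff₀ (hw i)).1 (hi0 i (Finset.mem_univ i))
    have hc0 : 0 < c := by
      obtain ⟨i1, hi1⟩ := Function.ne_iff.1 hv0
      have h1 : 0 < ‖v i1‖ / w i1 :=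
        div_pos (by simpa using hi1) (hw i1)
      exact lt_of_lt_of_le h1 (hi0 i1 (Finset.mem_univ i1))
    have heq : ‖v i0‖ = c * w i0 := by
      rw [hcdef, div_mul_cancel₀ _ (ne_of_gt (hw i0))]
    have hRnn : ∀ i j : Fin m, 0 ≤ incidenceR y f i j := by
      intro i j
      rw [hR]
      split <;> norm_num
    have hrow : mu * v i0 = ∑ k : Fin m, (incidenceR y f k i0 : ℂ) * v k := by
      have := congrFun hv i0
      simp only [Pi.smul_apply, smul_eq_mul] at this
      rw [this]
      simp only [Matrix.mulVec, dotProduct, Matrix.transpose_apply, hA,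
        Matrix.map_apply]
    have key : ‖mu‖ * (c * w i0) ≤ c * (lam * w i0) := by
      rw [← heq, ← norm_mul, hrow]
      calc ‖∑ k : Fin m, (incidenceR y f k i0 : ℂ) * v k‖
          ≤ ∑ k : Fin m, ‖(incidenceR y f k i0 : ℂ) * v k‖ :=
            norm_sum_le _ _
        _ = ∑ k : Fin m, incidenceR y f k i0 * ‖v k‖ := by
            refine Finset.sum_congr rfl fun k _ => ?_
            rw [norm_mul, Complex.norm_real, Real.norm_eq_abs, abs_of_nonneg (hRnn k i0)]
        _ ≤ ∑ k : Fin m, incidenceR y f k i0 * (c * w k) :=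
            Finset.sum_le_sum fun k _ =>
              mul_le_mul_of_nonneg_left (hbound k) (hRnn k i0)
        _ = c * ∑ k : Fin m, (incidenceR y f)ᵀ i0 k * w k := by
            rw [Finset.mul_sum]
            refine Finset.sum_congr rfl fun k _ => ?_
            rw [Matrix.transpose_apply]
            ring
        _ = c * (lam * w i0) := by
            have := congrFun hwv i0
            simp only [Matrix.mulVec, dotProduct, Pi.smul_apply, smul_eq_mul] at this
            rw [this]
    have hcw : 0 < c * w i0 := mul_pos hc0 (hw i0)
    have key' : ‖mu‖ * (c * w i0) ≤ lam * (c * w i0) := by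
      calc ‖mu‖ * (c * w i0) ≤ c * (lam * w i0) := key
        _ = lam * (c * w i0) := by ring
    exact le_of_mul_le_mul_right key' hcw
end
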